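/- Let K be a field of characteristic 0 and let p = x₁(x₁² + x₂² + x₃² + ⋯) and q = x₁³ + x₂³ + ⋯ in S³_∞. Then p is not a specialisation of q: there is no element e of the row-finite substitution monoid E with S³(e)q = p. -/

import Mathlib

open MvPolynomial

/-- The inverse limit `S^d_∞ = lim← S^d(Kⁿ)`: compatible sequences of homogeneous degree-`d`
polynomials, where the map `S^d(K^{n+1}) → S^d(Kⁿ)` sets the last variable to `0`. -/
def PSeq (K : Type*) [CommSemiring K] (d : ℕ) : Type _ :=
  {p : ∀ n : ℕ, MvPolynomial (Fin n) K //
    (∀ n, (p n).IsHomogeneous d) ∧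
    ∀ n, aeval (fun i : Fin (n + 1) =>
        if h : i.1 < n then (X ⟨i.1, h⟩ : MvPolynomial (Fin n) K) else 0) (p (n + 1)) = p n}

/-- A matrix `e : ℕ × ℕ → K` is row-finite when each row has finitely many nonzero entries;
these matrices form the monoid `E` acting by substitutions `x_j ↦ Σ_i e i j • x_i`. -/
def RowFinite {K : Type*} [Zero K] (e : ℕ → ℕ → K) : Prop :=
  ∀ i, (Function.support (e i)).Finite

/-- `SpecTo q p` means that `q` specialises to `p`, i.e. `p = P(e) q` for some element `e` of
the monoid `E` of row-finite substitution matrices: at each finite level `n`, `p` is obtained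
from a sufficiently deep truncation of `q` by the substitution given by the corresponding
upper-left block of `e` (all the remaining entries of the first `n` rows vanishing). -/
def SpecTo {K : Type*} [CommSemiring K] {d : ℕ} (q p : PSeq K d) : Prop :=
  ∃ e : ℕ → ℕ → K, RowFinite e ∧
    ∀ n : ℕ, ∃ N : ℕ,
      (∀ i j : ℕ, i < n → N ≤ j → e i j = 0) ∧
      aeval (fun j : Fin N => ∑ i : Fin n, e i.1 j.1 • (X i : MvPolynomial (Fin n) K))
        (q.1 N) = p.1 n

open Finset in
private lemma aux_polarize (K : Type*) [Field K] [CharZero K] (n N : ℕ) (hn : 0 < n) (e : ℕ → ℕ → K)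
    (hF : ∀ v : Fin n → K, ∑ j : Fin N, (∑ i : Fin n, e i.1 j.1 * v i)^3
      = v ⟨0, hn⟩ * ∑ i : Fin n, (v i)^2) :
    ∀ v w : Fin n → K, v ⟨0, hn⟩ = 0 → w ⟨0, hn⟩ = 0 →
      ∑ j : Fin N, 3 * e 0 j.1 * (∑ i : Fin n, e i.1 j.1 * v i) * (∑ i : Fin n, e i.1 j.1 * w i)
        = ∑ i : Fin n, v i * w i := by
  intro v w hv hw
  set z : Fin n := ⟨0, hn⟩ with hz
  set d : Fin n → K := Pi.single z 1 with hd
  have hLd : ∀ j : Fin N, (∑ i : Fin n, e i.1 j.1 * d i) = e 0 j.1 := by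
    intro j
    simp [hd, Pi.single_apply, mul_ite, Finset.sum_ite_eq']
    rfl
  have hdip : ∀ u : Fin n → K, (∑ i : Fin n, d i * u i) = u z := by
    intro u
    simp [hd, Pi.single_apply, ite_mul, Finset.sum_ite_eq']
  have exp3 : ∀ (j : Fin N) (a b c : Fin n → K),
      (∑ i : Fin n, e i.1 j.1 * (a i + b i + c i))
        = (∑ i : Fin n, e i.1 j.1 * a i) + (∑ i : Fin n, e i.1 j.1 * b i)
          + (∑ i : Fin n, e i.1 j.1 * c i) := by
    intro j a b c
    rw [← Finset.sum_add_distrib, ← Finset.sum_add_distrib]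
    exact Finset.sum_congr rfl fun i _ => by ring
  have exp2 : ∀ (j : Fin N) (a b : Fin n → K),
      (∑ i : Fin n, e i.1 j.1 * (a i + b i))
        = (∑ i : Fin n, e i.1 j.1 * a i) + (∑ i : Fin n, e i.1 j.1 * b i) := by
    intro j a b
    rw [← Finset.sum_add_distrib]
    exact Finset.sum_congr rfl fun i _ => by ring
  have expQ3 : ∀ a b c : Fin n → K, (∑ i : Fin n, (a i + b i + c i)^2)
      = (∑ i : Fin n, (a i)^2) + (∑ i : Fin n, (b i)^2) + (∑ i : Fin n, (c i)^2)
        + 2 * (∑ i : Fin n, a i * b i) + 2 * (∑ i : Fin n, a i * c i)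
        + 2 * (∑ i : Fin n, b i * c i) := by
    intro a b c
    simp only [Finset.mul_sum]
    rw [← Finset.sum_add_distrib, ← Finset.sum_add_distrib, ← Finset.sum_add_distrib,
      ← Finset.sum_add_distrib, ← Finset.sum_add_distrib]
    exact Finset.sum_congr rfl fun i _ => by ring
  have expQ2 : ∀ a b : Fin n → K, (∑ i : Fin n, (a i + b i)^2)
      = (∑ i : Fin n, (a i)^2) + (∑ i : Fin n, (b i)^2)
        + 2 * (∑ i : Fin n, a i * b i) := by
    intro a b
    simp only [Finset.mul_sum]
    rw [← Finset.sum_add_distrib, ← Finset.sum_add_distrib]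
    exact Finset.sum_congr rfl fun i _ => by ring
  have h1 := hF (d + v + w)
  have h2 := hF (d + v)
  have h3 := hF (d + w)
  have h4 := hF (v + w)
  have h5 := hF d
  have h6 := hF v
  have h7 := hF w
  have hdz : d z = 1 := by simp [hd]
  have hQdv : ∑ i : Fin n, d i * v i = 0 := by rw [hdip]; exact hv
  have hQdw : ∑ i : Fin n, d i * w i = 0 := by rw [hdip]; exact hw
  simp only [Pi.add_apply, exp3, exp2, expQ3, expQ2, hLd, hdz, hv, hw, hQdv, hQdw]
    at h1 h2 h3 h4 h5 h6 h7
  have comb : ∑ j : Fin N, (2 * (3 * e 0 j.1 * (∑ i : Fin n, e i.1 j.1 * v i)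
        * (∑ i : Fin n, e i.1 j.1 * w i)))
      = 2 * ∑ i : Fin n, v i * w i := by
    have expand : ∀ j : Fin N, 2 * (3 * e 0 j.1 * (∑ i : Fin n, e i.1 j.1 * v i)
          * (∑ i : Fin n, e i.1 j.1 * w i))
        = (e 0 j.1 + (∑ i : Fin n, e i.1 j.1 * v i) + (∑ i : Fin n, e i.1 j.1 * w i))^3
          - (e 0 j.1 + (∑ i : Fin n, e i.1 j.1 * v i))^3
          - (e 0 j.1 + (∑ i : Fin n, e i.1 j.1 * w i))^3
          - ((∑ i : Fin n, e i.1 j.1 * v i) + (∑ i : Fin n, e i.1 j.1 * w i))^3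
          + (e 0 j.1)^3 + (∑ i : Fin n, e i.1 j.1 * v i)^3
          + (∑ i : Fin n, e i.1 j.1 * w i)^3 := by
      intro j; ring
    rw [Finset.sum_congr rfl fun j _ => expand j]
    simp only [Finset.sum_add_distrib, Finset.sum_sub_distrib]
    rw [h1, h2, h3, h4, h5, h6, h7]
    ring
  rw [← Finset.mul_sum] at comb
  exact mul_left_cancel₀ (two_ne_zero) comb

open Finset in
private lemma aux_contra (K : Type*) [Field K] [CharZero K] (N M : ℕ) (e : ℕ → ℕ → K)
    (hRF0 : (Function.support (e 0)).Finite) (hM : M = hRF0.toFinset.card)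
    (hn : 0 < M + 2)
    (hkey : ∀ v w : Fin (M + 2) → K, v ⟨0, hn⟩ = 0 → w ⟨0, hn⟩ = 0 →
      ∑ j : Fin N, 3 * e 0 j.1 * (∑ i : Fin (M + 2), e i.1 j.1 * v i)
          * (∑ i : Fin (M + 2), e i.1 j.1 * w i)
        = ∑ i : Fin (M + 2), v i * w i) : False := by
  classical
  set n := M + 2 with hn2
  set z : Fin n := ⟨0, hn⟩ with hz
  -- Step 1: matrix identity
  have hB : ∀ b c : Fin n, b ≠ z → c ≠ z →
      ∑ j : Fin N, 3 * e 0 j.1 * e b.1 j.1 * e c.1 j.1 = if b = c then 1 else 0 := by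
    intro b c hb hc
    have h := hkey (Pi.single b 1 : Fin n → K) (Pi.single c 1 : Fin n → K)
      (by rw [Pi.single_eq_of_ne (Ne.symm hb)]) (by rw [Pi.single_eq_of_ne (Ne.symm hc)])
    have hsb : ∀ j : Fin N,
        (∑ i : Fin n, e i.1 j.1 * (Pi.single b 1 : Fin n → K) i) = e b.1 j.1 := by
      intro j; simp [Pi.single_apply, mul_ite, Finset.sum_ite_eq']
    have hsc : ∀ j : Fin N,
        (∑ i : Fin n, e i.1 j.1 * (Pi.single c 1 : Fin n → K) i) = e c.1 j.1 := by
      intro j; simp [Pi.single_apply, mul_ite, Finset.sum_ite_eq']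
    have hrhs : (∑ i : Fin n, (Pi.single b 1 : Fin n → K) i * (Pi.single c 1 : Fin n → K) i)
        = if b = c then 1 else 0 := by
      rcases eq_or_ne b c with rfl | hbc
      · simp [Pi.single_apply, ite_mul, Finset.sum_ite_eq']
      · rw [if_neg hbc]
        apply Finset.sum_eq_zero
        intro i _
        rcases eq_or_ne i b with rfl | hib
        · rw [Pi.single_eq_of_ne hbc]; ring
        · rw [Pi.single_eq_of_ne hib]; ring
    have h' : ∑ j : Fin N, 3 * e 0 j.1 * (∑ i : Fin n, e i.1 j.1 * (Pi.single b 1 : Fin n → K) i)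
        * (∑ i : Fin n, e i.1 j.1 * (Pi.single c 1 : Fin n → K) i)
        = ∑ i : Fin n, (Pi.single b 1 : Fin n → K) i * (Pi.single c 1 : Fin n → K) i := h
    simp only [hsb, hsc, hrhs] at h'
    exact h'
  -- Step 2: support finset
  set S : Finset (Fin N) := Finset.univ.filter (fun j => e 0 j.1 ≠ 0) with hS
  have hcardS : S.card ≤ M := by
    rw [hM]
    apply Finset.card_le_card_of_injOn (fun j => j.1)
    · intro j hj
      simp only [hS, Finset.mem_coe, Finset.mem_filter] at hj
      simpa using hj.2
    · intro a _ b _ hab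
      exact Fin.ext hab
  have hB' : ∀ b c : Fin n, b ≠ z → c ≠ z →
      ∑ j ∈ S, 3 * e 0 j.1 * e b.1 j.1 * e c.1 j.1 = if b = c then 1 else 0 := by
    intro b c hb hc
    rw [← hB b c hb hc, hS]
    apply Finset.sum_filter_of_ne
    intro j _ hne h0
    exact hne (by rw [h0]; ring)
  -- Step 3: linear independence
  have emb : ∀ b : Fin (M + 1), (⟨b.1 + 1, by omega⟩ : Fin n) ≠ z := by
    intro b
    rw [hz, ne_eq, Fin.ext_iff]
    simp
  set f : Fin (M + 1) → (↥S → K) := fun b j => e (b.1 + 1) j.1.1 with hf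
  have hli : LinearIndependent K f := by
    rw [Fintype.linearIndependent_iff]
    intro g hg c
    have hpt : ∀ j : Fin N, j ∈ S → ∑ b : Fin (M + 1), g b * e (b.1 + 1) j.1 = 0 := by
      intro j hj
      have := congrFun hg ⟨j, hj⟩
      simpa [hf, Finset.sum_apply] using this
    calc g c = ∑ b : Fin (M + 1), g b *
          (∑ j ∈ S, 3 * e 0 j.1 * e (b.1 + 1) j.1 * e (c.1 + 1) j.1) := by
          rw [Finset.sum_congr rfl (fun b _ => by
            rw [hB' ⟨b.1 + 1, by omega⟩ ⟨c.1 + 1, by omega⟩ (emb b) (emb c)])]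
          simp only [Fin.mk.injEq, add_left_inj, Fin.val_inj, mul_ite, mul_one, mul_zero,
            Finset.sum_ite_eq', Finset.mem_univ, if_true]
      _ = ∑ j ∈ S, (∑ b : Fin (M + 1), g b * e (b.1 + 1) j.1) *
            (3 * e 0 j.1 * e (c.1 + 1) j.1) := by
          simp only [Finset.mul_sum]
          rw [Finset.sum_comm]
          refine Finset.sum_congr rfl fun j _ => ?_
          rw [Finset.sum_mul]
          exact Finset.sum_congr rfl fun b _ => by ring
      _ = 0 := by
          apply Finset.sum_eq_zero
          intro j hj
          rw [hpt j hj, zero_mul]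
  have hcard := hli.fintype_card_le_finrank
  rw [Module.finrank_pi] at hcard
  simp only [Fintype.card_fin, Fintype.card_coe] at hcard
  omega


/-- The cubic `p = x₀(x₀² + x₁² + x₂² + ⋯)` is not a specialisation of
`q = x₀³ + x₁³ + ⋯`: there is no row-finite substitution matrix `e` with `S³(e) q = p`. -/
theorem stmt16 (K : Type*) [Field K] [CharZero K] (p q : PSeq K 3)
    (hp : ∀ n, p.1 n =
        (∑ i : Fin n, if i.1 = 0 then X i else 0) * (∑ i : Fin n, X i ^ 2))
    (hq : ∀ n, q.1 n = ∑ i : Fin n, X i ^ 3) :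
    ¬ SpecTo q p := by
  rintro ⟨e, hRF, hspec⟩
  set M := (hRF 0).toFinset.card with hM
  set n := M + 2 with hn2
  have hn : 0 < n := by omega
  obtain ⟨N, -, hev⟩ := hspec n
  rw [hq, hp] at hev
  have h2 : (∑ i : Fin n, if i.1 = 0 then (X i : MvPolynomial (Fin n) K) else 0)
      = X ⟨0, hn⟩ := by
    have hc : ∀ i : Fin n, (i.1 = 0) ↔ (i = ⟨0, hn⟩) := fun i => (Fin.ext_iff (a := i) (b := ⟨0, hn⟩)).symm
    simp_rw [hc]
    rw [Finset.sum_ite_eq' Finset.univ (⟨0, hn⟩ : Fin n) (fun i => (X i : MvPolynomial (Fin n) K))]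
    simp
  rw [h2] at hev
  have hF : ∀ v : Fin n → K, ∑ j : Fin N, (∑ i : Fin n, e i.1 j.1 * v i)^3
      = v ⟨0, hn⟩ * ∑ i : Fin n, (v i)^2 := by
    intro v
    have := congrArg (eval v) hev
    simpa [map_sum, map_pow, smul_eq_C_mul] using this
  exact aux_contra K N M e (hRF 0) hM hn (aux_polarize K n N hn e hF)
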